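/- If suf(j1) is an L-suffix not the largest L-suffix starting with its first character t, suf(j2) belongs to the set of largest-L-or-smallest-LMS suffixes starting with t, and suf(j3) is an LMS-suffix starting with t that is not the smallest, then suf(j1) < suf(j2) < suf(j3). -/

import Mathlib

variable {α : Type*}

/-- The suffix of `T` starting at (1-based) position `i`. -/
def Suf (T : List α) (i : ℕ) : List α := T.drop (i - 1)

/-- The (1-based) `i`-th character of `T`, i.e. the first character of `Suf T i`. -/
def Chr [Inhabited α] (T : List α) (i : ℕ) : α := (Suf T i).headI

/-- `Suf T i` is lexicographically smaller than `Suf T j`. -/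
def SufLt [LT α] (T : List α) (i j : ℕ) : Prop := List.Lex (· < ·) (Suf T i) (Suf T j)

/-- `Suf T i` is an S-suffix (position in range, and `i = N` or `suf i < suf (i+1)`). -/
def IsS [LinearOrder α] (T : List α) (i : ℕ) : Prop :=
  1 ≤ i ∧ i ≤ T.length ∧ (i = T.length ∨ SufLt T i (i + 1))

/-- `Suf T i` is an L-suffix (position in range and not an S-suffix). -/
def IsL [LinearOrder α] (T : List α) (i : ℕ) : Prop :=
  1 ≤ i ∧ i ≤ T.length ∧ ¬ (i = T.length ∨ SufLt T i (i + 1))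

/-- `Suf T i` is an LMS-suffix: an S-suffix whose preceding suffix is an L-suffix. -/
def IsLMS [LinearOrder α] (T : List α) (i : ℕ) : Prop :=
  1 < i ∧ IsS T i ∧ IsL T (i - 1)

/-- The last character of `T` is strictly smaller than every other character of `T`. -/
def LastSmallest [Inhabited α] [LinearOrder α] (T : List α) : Prop :=
  ∀ i, 1 ≤ i → i < T.length → Chr T T.length < Chr T i



lemma suf_cons [Inhabited α] (T : List α) (i : ℕ) (h1 : 1 ≤ i) (h2 : i ≤ T.length) :
    Suf T i = Chr T i :: Suf T (i + 1) := by
  have hlt : i - 1 < T.length := by omega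
  have h := List.drop_eq_getElem_cons hlt
  have : i - 1 + 1 = i := by omega
  rw [this] at h
  simp only [Suf, Chr, Nat.add_sub_cancel]
  rw [h]; simp

lemma suf_ne [Inhabited α] (T : List α) (i : ℕ) (h1 : 1 ≤ i) (h2 : i ≤ T.length) :
    Suf T (i + 1) ≠ Suf T i := by
  intro h
  have := congrArg List.length h
  simp only [Suf, List.length_drop, Nat.add_sub_cancel] at this
  omega

lemma isL_lt [Inhabited α] [LinearOrder α] (T : List α) (i : ℕ) (h : IsL T i) :
    i < T.length ∧ SufLt T (i + 1) i := by
  obtain ⟨hi1, hi2, hi3⟩ := h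
  push_neg at hi3
  obtain ⟨hne, hnlex⟩ := hi3
  refine ⟨by omega, ?_⟩
  rcases lt_trichotomy (Suf T (i+1)) (Suf T i) with h'|h'|h'
  · exact h'
  · exact absurd h' (suf_ne T i hi1 hi2)
  · exact absurd h' hnlex

lemma lex_cons_inv [LinearOrder α] {a b : α} {l1 l2 : List α}
    (h : List.Lex (· < ·) (a :: l1) (b :: l2)) :
    a < b ∨ (a = b ∧ List.Lex (· < ·) l1 l2) := by
  cases h with
  | rel h => exact Or.inl h
  | cons h => exact Or.inr ⟨rfl, h⟩

lemma key [Inhabited α] [LinearOrder α] (T : List α) (hlast : LastSmallest T) :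
    ∀ n i j, T.length - i + (T.length - j) ≤ n → IsL T i → IsS T j →
      Chr T i = Chr T j → SufLt T i j := by
  intro n
  induction n with
  | zero =>
    intro i j hn hi _ _
    have := (isL_lt T i hi).1
    omega
  | succ n ih =>
    intro i j hn hi hj hc
    obtain ⟨hiN, hLi⟩ := isL_lt T i hi
    obtain ⟨hj1, hj2, hj3⟩ := hj
    -- rule out j = length
    rcases hj3 with hjN | hjS
    · exfalso
      have := hlast i hi.1 hiN
      rw [← hjN, ← hc] at this
      exact lt_irrefl _ this
    · -- j < length: otherwise Suf (j+1) = [] and SufLt T j (j+1) impossible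
      have hjN : j < T.length := by
        by_contra h
        have hje : j = T.length := by omega
        have hnil : Suf T (j + 1) = [] := by
          apply List.drop_eq_nil_of_le
          omega
        rw [SufLt, hnil] at hjS
        exact List.not_lex_nil hjS
      have hdi := suf_cons T i hi.1 hi.2.1
      have hdj := suf_cons T j hj1 hj2
      have hdi1 := suf_cons T (i+1) (by omega) (by omega)
      have hdj1 := suf_cons T (j+1) (by omega) (by omega)
      set t := Chr T i with ht
      set t1 := Chr T (i+1) with ht1
      set t2 := Chr T (j+1) with ht2
      -- from L: Suf (i+1) < Suf i = t :: Suf (i+1)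
      rw [SufLt, hdi, hdi1] at hLi
      -- t1 :: Suf (i+2) < t :: t1 :: Suf(i+2)
      have hcase1 : t1 < t ∨ (t1 = t ∧ SufLt T (i+2) (i+1)) := by
        rcases lex_cons_inv hLi with h | ⟨he, h⟩
        · exact Or.inl h
        · refine Or.inr ⟨he, ?_⟩
          rw [SufLt, hdi1]
          exact h
      rw [SufLt, hdj, hdj1, ← hc] at hjS
      have hcase2 : t < t2 ∨ (t = t2 ∧ SufLt T (j+1) (j+2)) := by
        rcases lex_cons_inv hjS with h | ⟨he, h⟩
        · exact Or.inl h
        · refine Or.inr ⟨he, ?_⟩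
          rw [SufLt, hdj1]
          exact h
      -- goal : Suf i < Suf j, i.e. t :: Suf (i+1) < t :: Suf (j+1)
      rw [SufLt, hdi, hdj, ← hc]
      apply List.Lex.cons
      rw [hdi1, hdj1]
      have ht1t : t1 ≤ t := by
        rcases hcase1 with h|h
        · exact le_of_lt h
        · exact le_of_eq h.1
      have htt2 : t ≤ t2 := by
        rcases hcase2 with h|h
        · exact le_of_lt h
        · exact le_of_eq h.1
      rcases eq_or_lt_of_le (le_trans ht1t htt2) with heq | hlt
      · -- t1 = t2, hence t1 = t = t2 : recurse
        have e1 : t1 = t := le_antisymm ht1t (by rw [heq]; exact htt2)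
        have e2 : t = t2 := by rw [← heq, e1]
        have hS1 : SufLt T (i+2) (i+1) := by
          rcases hcase1 with h|h
          · exact absurd e1 (ne_of_lt h)
          · exact h.2
        have hS2 : SufLt T (j+1) (j+2) := by
          rcases hcase2 with h|h
          · exact absurd e2 (ne_of_lt h)
          · exact h.2
        -- i+1 ≠ length : else t1 = Chr T length < Chr T i = t = t1
        have hi1N : i + 1 ≠ T.length := by
          intro h
          have := hlast i hi.1 hiN
          rw [← h, ← ht1, e1, ht] at this
          exact lt_irrefl _ this
        have hLi1 : IsL T (i+1) := by
          refine ⟨by omega, by omega, ?_⟩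
          push_neg
          refine ⟨hi1N, ?_⟩
          intro hcon
          exact lt_asymm (α := List α)
            (show Suf T (i+1) < Suf T (i+2) from hcon)
            (show Suf T (i+2) < Suf T (i+1) from hS1)
        have hSj1 : IsS T (j+1) := ⟨by omega, by omega, Or.inr hS2⟩
        have hrec := ih (i+1) (j+1) (by omega) hLi1 hSj1 (by rw [← ht1, ← ht2, e1, e2])
        rw [SufLt, hdi1, hdj1] at hrec
        rw [← ht1, ← e2, e1] at *
        exact hrec
      · exact List.Lex.rel hlt

/-- If `suf j1` is an L-suffix with first character `t` that is not the largest such,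
`suf j2` is the largest L-suffix with first character `t` (or, if none exists, the
smallest LMS-suffix with first character `t`), and `suf j3` is an LMS-suffix with
first character `t` that is not the smallest such, then `suf j1 < suf j2 < suf j3`. -/
theorem stmt13 [Inhabited α] [LinearOrder α] (T : List α) (hlast : LastSmallest T)
    (j1 j2 j3 : ℕ) (t : α)
    (h1 : IsL T j1 ∧ Chr T j1 = t ∧
          ∃ k, IsL T k ∧ Chr T k = t ∧ SufLt T j1 k)
    (h2 : (IsL T j2 ∧ Chr T j2 = t ∧
            ∀ k, IsL T k → Chr T k = t → Suf T k = Suf T j2 ∨ SufLt T k j2) ∨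
          ((¬ ∃ k, IsL T k ∧ Chr T k = t) ∧ IsLMS T j2 ∧ Chr T j2 = t ∧
            ∀ k, IsLMS T k → Chr T k = t → Suf T k = Suf T j2 ∨ SufLt T j2 k))
    (h3 : IsLMS T j3 ∧ Chr T j3 = t ∧
          ∃ k, IsLMS T k ∧ Chr T k = t ∧ SufLt T k j3) :
    SufLt T j1 j2 ∧ SufLt T j2 j3 := by
  obtain ⟨hL1, hc1, k, hLk, hck, hlt1k⟩ := h1
  obtain ⟨hLMS3, hc3, -⟩ := h3
  rcases h2 with ⟨hL2, hc2, hmax⟩ | ⟨hno, -, -, -⟩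
  · constructor
    · rcases hmax k hLk hck with heq | hlt
      · rw [SufLt, ← heq]; exact hlt1k
      · exact lt_trans (α := List α)
          (show Suf T j1 < Suf T k from hlt1k)
          (show Suf T k < Suf T j2 from hlt)
    · exact key T hlast (2 * T.length) j2 j3 (by omega) hL2 hLMS3.2.1
        (by rw [hc2, hc3])
  · exact absurd ⟨j1, hL1, hc1⟩ hno
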